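/- Let w and m be positive natural numbers with 1 ≤ m ≤ 2^{w−1}, and suppose m does not divide 2^w. If J is uniformly distributed on {0, 1, …, 2^w − 1} and Y = 1 + ⌊m·J/2^w⌋, then the ratio (max_{1 ≤ k ≤ m} P(Y = k)) / (min_{1 ≤ k ≤ m} P(Y = k)) is at most 1 + m·2^{−w+1}. -/

import Mathlib

/-- The probability that the multiply-and-floor method outputs `k`, when `J` is uniformly
distributed on `{0, 1, …, 2^w − 1}` and `Y = 1 + ⌊m·J/2^w⌋`:
`P(Y = k) = #{j < 2^w | 1 + ⌊m·j/2^w⌋ = k} / 2^w`. -/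
def floorMulProb (w m k : ℕ) : ℚ :=
  (((Finset.range (2 ^ w)).filter (fun j => 1 + m * j / 2 ^ w = k)).card : ℚ) / 2 ^ w

/-- if `1 ≤ m ≤ 2^{w−1}` and `m` does not divide `2^w`, then
`(max_{1 ≤ k ≤ m} P(Y = k)) / (min_{1 ≤ k ≤ m} P(Y = k)) ≤ 1 + m·2^{−w+1}`. -/
theorem floorMul_ratio_le (w m : ℕ) (hw : 0 < w) (hm1 : 1 ≤ m) (hm2 : m ≤ 2 ^ (w - 1))
    (hnd : ¬ m ∣ 2 ^ w) :
    (Finset.Icc 1 m).sup' (Finset.nonempty_Icc.mpr hm1) (floorMulProb w m) /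
        (Finset.Icc 1 m).inf' (Finset.nonempty_Icc.mpr hm1) (floorMulProb w m)
      ≤ 1 + (m : ℚ) * (2 : ℚ) ^ (-(w : ℤ) + 1) := by
  set N := 2 ^ w with hNdef
  have hN0 : 0 < N := Nat.pow_pos (by norm_num)
  have hm0 : 0 < m := hm1
  have h2m : 2 * m ≤ N := by
    have : N = 2 * 2 ^ (w - 1) := by
      rw [hNdef, ← pow_succ']
      congr 1
      omega
    omega
  set q := N / m with hqdef
  set r := N % m with hrdef
  have hNqr : m * q + r = N := Nat.div_add_mod N m
  have hr0 : 0 < r := by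
    rcases Nat.eq_zero_or_pos r with h | h
    · exact absurd (Nat.dvd_of_mod_eq_zero h) hnd
    · exact h
  have hrm : r < m := Nat.mod_lt _ hm0
  have hq1 : 1 ≤ q := (Nat.one_le_div_iff hm0).mpr (by omega)
  -- ceiling function c t = ⌈t*N/m⌉
  set c : ℕ → ℕ := fun t => (t * N + (m - 1)) / m with hcdef
  have hc_le : ∀ t j : ℕ, c t ≤ j ↔ t * N ≤ m * j := by
    intro t j
    rw [hcdef]
    simp only
    rw [Nat.div_le_iff_le_mul_add_pred hm0]
    omega
  have hc_self : ∀ t, t * N ≤ m * c t := fun t => (hc_le t (c t)).mp le_rfl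
  have hc_ub : ∀ t, m * c t ≤ t * N + (m - 1) := by
    intro t
    rw [hcdef]
    simp only
    rw [Nat.mul_comm]
    exact Nat.div_mul_le_self _ _
  have hc_mono : ∀ t, c t ≤ c (t + 1) := by
    intro t
    apply Nat.div_le_div_right
    have : t * N ≤ (t + 1) * N := Nat.mul_le_mul_right _ (by omega)
    omega
  -- the count of j with ⌊m j / N⌋ = t
  have hcard : ∀ t, t + 1 ≤ m →
      ((Finset.range N).filter (fun j => m * j / N = t)).card = c (t + 1) - c t := by
    intro t ht
    have hset : ((Finset.range N).filter (fun j => m * j / N = t)) =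
        Finset.Ico (c t) (c (t + 1)) := by
      ext j
      simp only [Finset.mem_filter, Finset.mem_range, Finset.mem_Ico]
      constructor
      · rintro ⟨hj, hfl⟩
        have h1 : t * N ≤ m * j := by
          rw [← hfl]
          exact Nat.div_mul_le_self _ _
        have h2 : m * j < (t + 1) * N := by
          have : m * j / N < t + 1 := by omega
          exact (Nat.div_lt_iff_lt_mul hN0).mp this
        refine ⟨(hc_le t j).mpr h1, ?_⟩
        by_contra hcon
        push_neg at hcon
        have := (hc_le (t + 1) j).mp hcon
        omega
      · rintro ⟨h1, h2⟩
        have ha : t * N ≤ m * j := (hc_le t j).mp h1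
        have hb : m * j < (t + 1) * N := by
          by_contra hcon
          push_neg at hcon
          have := (hc_le (t + 1) j).mpr hcon
          omega
        have hjN : j < N := by
          have : m * j < m * N := by
            calc m * j < (t + 1) * N := hb
            _ ≤ m * N := Nat.mul_le_mul_right _ ht
          exact Nat.lt_of_mul_lt_mul_left this
        refine ⟨hjN, ?_⟩
        have hle : t ≤ m * j / N := (Nat.le_div_iff_mul_le hN0).mpr (by omega)
        have hlt : m * j / N < t + 1 := (Nat.div_lt_iff_lt_mul hN0).mpr hb
        omega
    rw [hset, Nat.card_Ico]
  -- bounds on the count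
  have hlow : ∀ t, q ≤ c (t + 1) - c t := by
    intro t
    by_contra hcon
    push_neg at hcon
    have h1 : c (t + 1) + 1 ≤ c t + q := by
      have := hc_mono t
      omega
    have h2 : m * (c (t + 1) + 1) ≤ m * (c t + q) := Nat.mul_le_mul_left m h1
    have h3 : (t + 1) * N ≤ m * c (t + 1) := hc_self (t + 1)
    have h4 : m * c t ≤ t * N + (m - 1) := hc_ub t
    have e1 : m * (c (t + 1) + 1) = m * c (t + 1) + m := by ring
    have e2 : m * (c t + q) = m * c t + m * q := by ring
    have e3 : (t + 1) * N = t * N + N := by ring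
    omega
  have hhigh : ∀ t, c (t + 1) - c t ≤ q + 1 := by
    intro t
    by_contra hcon
    push_neg at hcon
    have h1 : c t + q + 2 ≤ c (t + 1) := by omega
    have h2 : m * (c t + q + 2) ≤ m * c (t + 1) := Nat.mul_le_mul_left m h1
    have h3 : t * N ≤ m * c t := hc_self t
    have h4 : m * c (t + 1) ≤ (t + 1) * N + (m - 1) := hc_ub (t + 1)
    have e1 : m * (c t + q + 2) = m * c t + m * q + 2 * m := by ring
    have e2 : (t + 1) * N = t * N + N := by ring
    omega
  -- floorMulProb in terms of counts
  have hprob : ∀ k, 1 ≤ k → k ≤ m →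
      floorMulProb w m k = ((c k - c (k - 1) : ℕ) : ℚ) / N := by
    intro k hk1 hkm
    have hfe : ((Finset.range N).filter (fun j => 1 + m * j / N = k)) =
        (Finset.range N).filter (fun j => m * j / N = k - 1) := by
      apply Finset.filter_congr
      intro j _
      generalize m * j / N = a
      omega
    have hc' : ((Finset.range N).filter (fun j => m * j / N = k - 1)).card
        = c (k - 1 + 1) - c (k - 1) := hcard (k - 1) (by omega)
    have hk' : k - 1 + 1 = k := by omega
    have hden : ((2:ℚ))^w = ((N : ℕ) : ℚ) := by rw [hNdef]; push_cast; ring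
    rw [floorMulProb, show (2:ℕ)^w = N from hNdef.symm, hfe, hc', hk', hden]
  have hNQ : (0 : ℚ) < (N : ℚ) := by positivity
  have hqQ : (0 : ℚ) < (q : ℚ) := by exact_mod_cast hq1
  -- bounds on probabilities
  have hub : ∀ k ∈ Finset.Icc 1 m, floorMulProb w m k ≤ ((q : ℚ) + 1) / N := by
    intro k hk
    rw [Finset.mem_Icc] at hk
    rw [hprob k hk.1 hk.2]
    apply div_le_div_of_nonneg_right ?_ hNQ.le |>.trans_eq rfl
    have := hhigh (k - 1)
    have hk' : k - 1 + 1 = k := by omega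
    rw [hk'] at this
    exact_mod_cast this
  have hlb : ∀ k ∈ Finset.Icc 1 m, (q : ℚ) / N ≤ floorMulProb w m k := by
    intro k hk
    rw [Finset.mem_Icc] at hk
    rw [hprob k hk.1 hk.2]
    apply div_le_div_of_nonneg_right ?_ hNQ.le |>.trans_eq rfl
    have := hlow (k - 1)
    have hk' : k - 1 + 1 = k := by omega
    rw [hk'] at this
    exact_mod_cast this
  have hsup : (Finset.Icc 1 m).sup' (Finset.nonempty_Icc.mpr hm1) (floorMulProb w m)
      ≤ ((q : ℚ) + 1) / N := Finset.sup'_le _ _ hub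
  have hinf : (q : ℚ) / N ≤ (Finset.Icc 1 m).inf' (Finset.nonempty_Icc.mpr hm1)
      (floorMulProb w m) := Finset.le_inf' _ _ hlb
  have hinfpos : (0 : ℚ) < (q : ℚ) / N := by positivity
  have hratio : (Finset.Icc 1 m).sup' (Finset.nonempty_Icc.mpr hm1) (floorMulProb w m) /
      (Finset.Icc 1 m).inf' (Finset.nonempty_Icc.mpr hm1) (floorMulProb w m)
      ≤ (((q : ℚ) + 1) / N) / ((q : ℚ) / N) := by
    apply div_le_div₀ (by positivity) hsup hinfpos hinf
  have heq : (((q : ℚ) + 1) / N) / ((q : ℚ) / N) = ((q : ℚ) + 1) / q := by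
    field_simp
  -- key inequality: N ≤ 2 m q
  have hkey : N ≤ 2 * (m * q) := by omega
  have hpow : (2 : ℚ) ^ (-(w : ℤ) + 1) = 2 / (N : ℚ) := by
    rw [zpow_add₀ (by norm_num : (2:ℚ) ≠ 0), zpow_neg, zpow_natCast, zpow_one]
    rw [hNdef]
    push_cast
    ring
  rw [hpow]
  refine hratio.trans ?_
  rw [heq]
  rw [div_le_iff₀ hqQ]
  have hkeyQ : (N : ℚ) ≤ 2 * ((m : ℚ) * q) := by exact_mod_cast hkey
  have h1 : (1 + (m : ℚ) * (2 / N)) * q = q + 2 * ((m : ℚ) * q) / N := by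
    field_simp
  rw [h1]
  have h2 : (1 : ℚ) ≤ 2 * ((m : ℚ) * q) / N := by
    rw [le_div_iff₀ hNQ, one_mul]
    exact hkeyQ
  linarith
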